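/- Suppose C ⊇ M is full and ⟨A, B⟩ is an M-f.s. sequence over C. If ā₁, ā₂ are tuples from A and b̄₁, b̄₂ are tuples from B with tp(ā₁/C) = tp(ā₂/C) and tp(b̄₁/C) = tp(b̄₂/C), then tp(ā₁b̄₁/C) = tp(ā₂b̄₂/C). -/

import Mathlib

open FirstOrder FirstOrder.Language Cardinal Set

universe u v w

namespace MonadicNIP

variable {L : FirstOrder.Language.{u, u}} {C : Type u} [L.Structure C]

/-- The complete type of the tuple `a` over the parameter set `B`:
all formulas with parameters from `B` and variables `α` satisfied by `a`. -/
def tpSet {α : Type v} (B : Set C) (a : α → C) : Set (L.Formula (B ⊕ α)) :=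
  {φ | φ.Realize (Sum.elim (Subtype.val : B → C) a)}

/-- A set of formulas over `B` (a "type") is finitely satisfied in `M` if each of
its formulas is realized by a tuple from `M`. -/
def FinSat (M : Set C) {α : Type v} {B : Set C} (p : Set (L.Formula (B ⊕ α))) : Prop :=
  ∀ φ ∈ p, ∃ m : α → C, (∀ i, m i ∈ M) ∧
    Formula.Realize φ (Sum.elim (Subtype.val : B → C) m)

/-- `p` is a complete type over `B` (in the monster `C`): finitely satisfiable
in `C` and deciding every formula. -/
def IsCompleteType {α : Type v} (B : Set C) (p : Set (L.Formula (B ⊕ α))) : Prop :=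
  (∀ s : Finset (L.Formula (B ⊕ α)), ↑s ⊆ p →
      ∃ a : α → C, ∀ φ ∈ s, Formula.Realize φ (Sum.elim (Subtype.val : B → C) a)) ∧
    ∀ φ : L.Formula (B ⊕ α), φ ∈ p ∨ φ.not ∈ p

/-- `tp(A/B)` is finitely satisfied in `M` (formulated without an enumeration of `A`). -/
def SetFinSat (L : FirstOrder.Language.{u, u}) {C : Type u} [L.Structure C] (M B A : Set C) : Prop :=
  ∀ (n : ℕ) (φ : L.Formula (B ⊕ Fin n)) (a : Fin n → C), (∀ i, a i ∈ A) →
    φ.Realize (Sum.elim (Subtype.val : B → C) a) →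
    ∃ m : Fin n → C, (∀ i, m i ∈ M) ∧ φ.Realize (Sum.elim (Subtype.val : B → C) m)

/-- `⟨A i : i ∈ I⟩` is an `M`-f.s. sequence over `B`. -/
def IsFSSeq (L : FirstOrder.Language.{u, u}) {C : Type u} [L.Structure C] (M B : Set C) {I : Type v} [LinearOrder I] (A : I → Set C) : Prop :=
  ∀ i : I, SetFinSat L M (B ∪ ⋃ j < i, A j) (A i)

/-- The average type of an ultrafilter `U` on `M^n` over the parameter set `B`. -/
def Av {n : ℕ} {M : Set C} (U : Ultrafilter (Fin n → M)) (B : Set C) :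
    Set (L.Formula (B ⊕ Fin n)) :=
  {φ | {m : Fin n → M |
      Formula.Realize φ (Sum.elim (Subtype.val : B → C) (fun i => (m i : C)))} ∈ U}

/-- `C0` is full (for non-splitting over `M`): every complete type over `M`
in finitely many variables (realized in the monster) is realized in `C0`. -/
def IsFull (L : FirstOrder.Language.{u, u}) {C : Type u} [L.Structure C] (M C0 : Set C) : Prop :=
  ∀ (n : ℕ) (a : Fin n → C), ∃ c : Fin n → C, (∀ i, c i ∈ C0) ∧
    tpSet (L := L) M a = tpSet (L := L) M c

/-- The sequence of tuples `a` is indiscernible over `B`. -/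
def IndiscernibleOver (L : FirstOrder.Language.{u, u}) {C : Type u} [L.Structure C] {I : Type v} [LinearOrder I] {α : Type w} (B : Set C)
    (a : I → α → C) : Prop :=
  ∀ (n : ℕ) (i j : Fin n → I), StrictMono i → StrictMono j →
    tpSet (L := L) B (fun p : Fin n × α => a (i p.1) p.2) =
      tpSet (L := L) B (fun p : Fin n × α => a (j p.1) p.2)

/-- The type `p` over `B` does not split over `M0`: parameter tuples from `B`
with the same type over `M0` are interchangeable in `p`. -/
def NotSplitOver (M0 : Set C) {B : Set C} {α : Type v}
    (p : Set (L.Formula (B ⊕ α))) : Prop :=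
  ∀ (k : ℕ) (b b' : Fin k → B) (φ : L.Formula (Fin k ⊕ α)),
    tpSet (L := L) M0 (fun i => (b i : C)) = tpSet (L := L) M0 (fun i => (b' i : C)) →
    (φ.relabel (Sum.elim (fun i => Sum.inl (b i)) Sum.inr) ∈ p ↔
      φ.relabel (Sum.elim (fun i => Sum.inl (b' i)) Sum.inr) ∈ p)



section Helpers

/-- Transfer lemma: if two tuples have the same type over `P`, then any formula whose
remaining variables are evaluated at elements of `P` cannot distinguish them. -/
theorem transfer {P : Set C} {ι : Type v} {κ : Type w} {x y : κ → C}
    (hxy : tpSet (L := L) P x = tpSet (L := L) P y) (g : ι → ↥P ⊕ κ)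
    (θ : L.Formula ι) :
    θ.Realize (fun i => Sum.elim (Subtype.val : P → C) x (g i)) ↔
      θ.Realize (fun i => Sum.elim (Subtype.val : P → C) y (g i)) := by
  have hx : (θ.relabel g).Realize (Sum.elim (Subtype.val : P → C) x) ↔
      θ.Realize (fun i => Sum.elim (Subtype.val : P → C) x (g i)) :=
    Formula.realize_relabel
  have hy : (θ.relabel g).Realize (Sum.elim (Subtype.val : P → C) y) ↔
      θ.Realize (fun i => Sum.elim (Subtype.val : P → C) y (g i)) :=
    Formula.realize_relabel
  rw [← hx, ← hy]
  exact Set.ext_iff.mp hxy (θ.relabel g)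

/-- Non-splitting from finite satisfiability: if `tp(b/P)` is finitely satisfied in `M`
and the parameter tuples `e`, `e'` from `P` have the same type over `M`, then `e`
and `e'` are interchangeable against `b`. -/
theorem ns {M P B : Set C} (hB : SetFinSat L M P B) {l : ℕ}
    (b : Fin l → C) (hb : ∀ i, b i ∈ B) {ι : Type v} (e e' : ι → C)
    (he : ∀ i, e i ∈ P) (he' : ∀ i, e' i ∈ P)
    (hM : ∀ θ : L.Formula (↥M ⊕ ι),
      θ.Realize (Sum.elim (Subtype.val : M → C) e) ↔
        θ.Realize (Sum.elim (Subtype.val : M → C) e'))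
    (ψ : L.Formula (ι ⊕ Fin l)) (hψ : ψ.Realize (Sum.elim e b)) :
    ψ.Realize (Sum.elim e' b) := by
  by_contra hcon
  let g : ι ⊕ Fin l → ↥P ⊕ Fin l := Sum.elim (fun i => Sum.inl ⟨e i, he i⟩) Sum.inr
  let g' : ι ⊕ Fin l → ↥P ⊕ Fin l := Sum.elim (fun i => Sum.inl ⟨e' i, he' i⟩) Sum.inr
  let χ : L.Formula (↥P ⊕ Fin l) := (ψ.relabel g) ⊓ (ψ.relabel g').not
  have hχ : χ.Realize (Sum.elim (Subtype.val : P → C) b) := by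
    rw [Formula.realize_inf, Formula.realize_not, Formula.realize_relabel,
      Formula.realize_relabel]
    have h1 : (Sum.elim (Subtype.val : P → C) b) ∘ g = Sum.elim e b := by
      funext i; cases i <;> rfl
    have h2 : (Sum.elim (Subtype.val : P → C) b) ∘ g' = Sum.elim e' b := by
      funext i; cases i <;> rfl
    rw [h1, h2]
    exact ⟨hψ, hcon⟩
  obtain ⟨m, hm, hmr⟩ := hB l χ b hb hχ
  rw [Formula.realize_inf, Formula.realize_not, Formula.realize_relabel,
    Formula.realize_relabel] at hmr
  have h1 : (Sum.elim (Subtype.val : P → C) m) ∘ g = Sum.elim e m := by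
    funext i; cases i <;> rfl
  have h2 : (Sum.elim (Subtype.val : P → C) m) ∘ g' = Sum.elim e' m := by
    funext i; cases i <;> rfl
  rw [h1, h2] at hmr
  let h : ι ⊕ Fin l → ↥M ⊕ ι := Sum.elim Sum.inr (fun j => Sum.inl ⟨m j, hm j⟩)
  let θ : L.Formula (↥M ⊕ ι) := ψ.relabel h
  have t1 : θ.Realize (Sum.elim (Subtype.val : M → C) e) := by
    rw [Formula.realize_relabel]
    have : (Sum.elim (Subtype.val : M → C) e) ∘ h = Sum.elim e m := by
      funext i; cases i <;> rfl
    rw [this]; exact hmr.1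
  have t2 := (hM θ).mp t1
  rw [Formula.realize_relabel] at t2
  have : (Sum.elim (Subtype.val : M → C) e') ∘ h = Sum.elim e' m := by
    funext i; cases i <;> rfl
  rw [this] at t2
  exact hmr.2 t2

/-- Every formula over `C0` with variables `Fin k ⊕ Fin l` is equivalent to one whose
`C0`-parameters form a finite tuple `d`. -/
theorem reduce {k l : ℕ} (C0 : Set C) (φ : L.Formula (↥C0 ⊕ (Fin k ⊕ Fin l))) :
    ∃ (n : ℕ) (d : Fin n → C), (∀ i, d i ∈ C0) ∧
      ∃ ψ : L.Formula ((Fin k ⊕ Fin n) ⊕ Fin l),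
        ∀ (a : Fin k → C) (b : Fin l → C),
          φ.Realize (Sum.elim (Subtype.val : C0 → C) (Sum.elim a b)) ↔
            ψ.Realize (Sum.elim (Sum.elim a d) b) := by
  classical
  set s := φ.freeVarFinset with hs
  set t : Finset (↥C0 ⊕ (Fin k ⊕ Fin l)) := s.filter (fun x => x.isLeft) with ht
  set n := t.card with hn
  let eqv : ↥t ≃ Fin n := t.equivFin
  have hleft : ∀ i : Fin n, ((eqv.symm i : ↥t) : ↥C0 ⊕ (Fin k ⊕ Fin l)).isLeft := by
    intro i
    exact (Finset.mem_filter.mp (eqv.symm i).2).2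
  let dC : Fin n → ↥C0 := fun i => ((eqv.symm i : ↥t) : ↥C0 ⊕ (Fin k ⊕ Fin l)).getLeft (hleft i)
  refine ⟨n, fun i => (dC i : C), fun i => (dC i).2, ?_⟩
  let f : {x : ↥C0 ⊕ (Fin k ⊕ Fin l) // x ∈ (↑s : Set (↥C0 ⊕ (Fin k ⊕ Fin l)))} →
      (Fin k ⊕ Fin n) ⊕ Fin l := fun x =>
    match x with
    | ⟨Sum.inl c, hx⟩ => Sum.inl (Sum.inr (eqv ⟨Sum.inl c,
        Finset.mem_filter.mpr ⟨Finset.mem_coe.mp hx, rfl⟩⟩))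
    | ⟨Sum.inr (Sum.inl i), _⟩ => Sum.inl (Sum.inl i)
    | ⟨Sum.inr (Sum.inr j), _⟩ => Sum.inr j
  have hsub : ↑φ.freeVarFinset ⊆ (↑s : Set (↥C0 ⊕ (Fin k ⊕ Fin l))) := by rw [hs]
  refine ⟨Formula.relabel f (φ.restrictFreeVar (Set.inclusion hsub)), fun a b => ?_⟩
  rw [Formula.realize_relabel]
  have hcomp : (Sum.elim (Sum.elim a (fun i => (dC i : C))) b) ∘ f =
      (Sum.elim (Subtype.val : C0 → C) (Sum.elim a b)) ∘ (Subtype.val) := by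
    funext x
    obtain ⟨x, hx⟩ := x
    match x with
    | Sum.inl c =>
        simp only [Function.comp_apply, Sum.elim_inl, Sum.elim_inr, f, dC,
          Equiv.symm_apply_apply]
        rfl
    | Sum.inr (Sum.inl i) => rfl
    | Sum.inr (Sum.inr j) => rfl
  rw [hcomp]
  exact (BoundedFormula.realize_restrictFreeVar' hsub).symm

end Helpers

/-- Over a full `C0 ⊇ M`, if `⟨A, B⟩` is an `M`-f.s. sequence over `C0`,
tuples `ā₁, ā₂` from `A` and `b̄₁, b̄₂` from `B` with `tp(ā₁/C0) = tp(ā₂/C0)` and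
`tp(b̄₁/C0) = tp(b̄₂/C0)` satisfy `tp(ā₁b̄₁/C0) = tp(ā₂b̄₂/C0)`. -/
theorem statement8 (M : L.ElementarySubstructure C) (C0 : Set C)
    (hMC : (M : Set C) ⊆ C0) (hfull : IsFull L (M : Set C) C0)
    (A B : Set C)
    (hA : SetFinSat L (M : Set C) C0 A)
    (hB : SetFinSat L (M : Set C) (C0 ∪ A) B)
    {k l : ℕ} (a1 a2 : Fin k → C) (b1 b2 : Fin l → C)
    (ha1 : ∀ i, a1 i ∈ A) (ha2 : ∀ i, a2 i ∈ A)
    (hb1 : ∀ i, b1 i ∈ B) (hb2 : ∀ i, b2 i ∈ B)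
    (hta : tpSet (L := L) C0 a1 = tpSet (L := L) C0 a2)
    (htb : tpSet (L := L) C0 b1 = tpSet (L := L) C0 b2) :
    tpSet (L := L) C0 (Sum.elim a1 b1) = tpSet (L := L) C0 (Sum.elim a2 b2) := by
  have key : ∀ (a1 a2 : Fin k → C) (b1 b2 : Fin l → C),
      (∀ i, a1 i ∈ A) → (∀ i, a2 i ∈ A) → (∀ i, b1 i ∈ B) → (∀ i, b2 i ∈ B) →
      tpSet (L := L) C0 a1 = tpSet (L := L) C0 a2 →
      tpSet (L := L) C0 b1 = tpSet (L := L) C0 b2 →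
      ∀ φ : L.Formula (↥C0 ⊕ (Fin k ⊕ Fin l)),
        φ.Realize (Sum.elim (Subtype.val : C0 → C) (Sum.elim a1 b1)) →
        φ.Realize (Sum.elim (Subtype.val : C0 → C) (Sum.elim a2 b2)) := by
    clear ha1 ha2 hb1 hb2 hta htb a1 a2 b1 b2
    intro a1 a2 b1 b2 ha1 ha2 hb1 hb2 hta htb φ H
    obtain ⟨n, d, hd, ψ, hψ⟩ := reduce C0 φ
    rw [hψ a1 b1] at H
    rw [hψ a2 b2]
    have he1 : ∀ v, Sum.elim a1 d v ∈ C0 ∪ A := by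
      intro v; cases v with
      | inl i => exact Set.mem_union_right _ (ha1 i)
      | inr j => exact Set.mem_union_left _ (hd j)
    have he2 : ∀ v, Sum.elim a2 d v ∈ C0 ∪ A := by
      intro v; cases v with
      | inl i => exact Set.mem_union_right _ (ha2 i)
      | inr j => exact Set.mem_union_left _ (hd j)
    -- use fullness to find a copy of (a1, d) inside C0 (over M)
    obtain ⟨c, hc, htc⟩ := hfull (k + n) (fun i => Sum.elim a1 d (finSumFinEquiv.symm i))
    set est : Fin k ⊕ Fin n → C := fun v => c (finSumFinEquiv v) with hest_def
    have hestC0 : ∀ v, est v ∈ C0 := fun v => hc _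
    have hest : ∀ v, est v ∈ C0 ∪ A := fun v => Set.mem_union_left _ (hestC0 v)
    -- (a1, d) and est have the same type over M
    have hM1s : ∀ θ : L.Formula (↥(M : Set C) ⊕ (Fin k ⊕ Fin n)),
        θ.Realize (Sum.elim (Subtype.val : ↥(M : Set C) → C) (Sum.elim a1 d)) ↔
          θ.Realize (Sum.elim (Subtype.val : ↥(M : Set C) → C) est) := by
      intro θ
      have h := transfer (L := L) (P := (M : Set C)) htc (Sum.map id finSumFinEquiv) θ
      have h1 : (fun i => Sum.elim (Subtype.val : ↥(M : Set C) → C)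
          (fun i => Sum.elim a1 d (finSumFinEquiv.symm i)) (Sum.map id finSumFinEquiv i)) =
          Sum.elim (Subtype.val : ↥(M : Set C) → C) (Sum.elim a1 d) := by
        funext i
        cases i with
        | inl m => rfl
        | inr v => simp [Sum.map]
      have h2 : (fun i => Sum.elim (Subtype.val : ↥(M : Set C) → C) c
          (Sum.map id finSumFinEquiv i)) =
          Sum.elim (Subtype.val : ↥(M : Set C) → C) est := by
        funext i
        cases i with
        | inl m => rfl
        | inr v => rfl
      rw [h1, h2] at h
      exact h
    -- (a1, d) and (a2, d) have the same type over M
    have hM12 : ∀ θ : L.Formula (↥(M : Set C) ⊕ (Fin k ⊕ Fin n)),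
        θ.Realize (Sum.elim (Subtype.val : ↥(M : Set C) → C) (Sum.elim a1 d)) ↔
          θ.Realize (Sum.elim (Subtype.val : ↥(M : Set C) → C) (Sum.elim a2 d)) := by
      intro θ
      let g : ↥(M : Set C) ⊕ (Fin k ⊕ Fin n) → ↥C0 ⊕ Fin k := fun i => match i with
        | Sum.inl m => Sum.inl (⟨(m : C), hMC m.2⟩ : ↥C0)
        | Sum.inr (Sum.inl v) => Sum.inr v
        | Sum.inr (Sum.inr j) => Sum.inl (⟨d j, hd j⟩ : ↥C0)
      have h := transfer (L := L) (P := C0) hta g θ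
      have h1 : ∀ (x : Fin k → C), (fun i => Sum.elim (Subtype.val : C0 → C) x (g i)) =
          Sum.elim (Subtype.val : ↥(M : Set C) → C) (Sum.elim x d) := by
        intro x
        funext i
        match i with
        | Sum.inl m => rfl
        | Sum.inr (Sum.inl v) => rfl
        | Sum.inr (Sum.inr j) => rfl
      rw [h1 a1, h1 a2] at h
      exact h
    -- b1 and b2 are interchangeable against parameters from C0
    have htbt : ∀ χ : L.Formula ((Fin k ⊕ Fin n) ⊕ Fin l),
        χ.Realize (Sum.elim est b1) ↔ χ.Realize (Sum.elim est b2) := by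
      intro χ
      have h := transfer (L := L) (P := C0) htb
        (Sum.map (fun v => (⟨est v, hestC0 v⟩ : ↥C0)) id) χ
      have h1 : ∀ (y : Fin l → C), (fun i => Sum.elim (Subtype.val : C0 → C) y
          (Sum.map (fun v => (⟨est v, hestC0 v⟩ : ↥C0)) id i)) = Sum.elim est y := by
        intro y
        funext i
        cases i with
        | inl v => rfl
        | inr j => rfl
      rw [h1 b1, h1 b2] at h
      exact h
    have H2 : ψ.Realize (Sum.elim est b1) :=
      ns hB b1 hb1 (Sum.elim a1 d) est he1 hest hM1s ψ H
    have H3 : ψ.Realize (Sum.elim est b2) := (htbt ψ).mp H2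
    have H4 : ψ.Realize (Sum.elim (Sum.elim a1 d) b2) :=
      ns hB b2 hb2 est (Sum.elim a1 d) hest he1 (fun θ => (hM1s θ).symm) ψ H3
    exact ns hB b2 hb2 (Sum.elim a1 d) (Sum.elim a2 d) he1 he2 hM12 ψ H4
  ext φ
  simp only [tpSet, Set.mem_setOf_eq]
  exact ⟨key a1 a2 b1 b2 ha1 ha2 hb1 hb2 hta htb φ,
    key a2 a1 b2 b1 ha2 ha1 hb2 hb1 hta.symm htb.symm φ⟩


end MonadicNIP
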